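/- Let θ ∈ (0, π/2) with θ ≠ π/4, ψ_θ = sin θ|00⟩ + cos θ|11⟩, t = tan θ, and define Ω_opt = α(θ)·(I₄ + Z⊗Z)/2 + (1−α(θ))·[I₄ − (1/(1+t)²)N], where α(θ) = (2 − sin 2θ)/(4 + sin 2θ) and N is the 4×4 matrix with diagonal (1, t, t, t²), entries −t in positions (0,3),(3,0), and zeros elsewhere (basis ordering |00⟩,|01⟩,|10⟩,|11⟩). Then: (i) Ω_opt is Hermitian with 0 ≤ Ω_opt ≤ I₄; (ii) Ω_opt ψ_θ = ψ_θ; and (iii) the supremum of ⟨φ, Ω_opt φ⟩ over unit vectors φ orthogonal to ψ_θ equals (2 + sin 2θ)/(4 + sin 2θ). -/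

import Mathlib

open Matrix Kronecker ComplexOrder

/-- The performance parameter `q(Ω, ψ)`: the supremum of `⟨φ, Ωφ⟩` over unit
vectors `φ` orthogonal to `ψ`. -/
noncomputable def qparam {n : Type*} [Fintype n] [DecidableEq n]
    (Ω : Matrix n n ℂ) (ψ : n → ℂ) : ℝ :=
  sSup {x : ℝ | ∃ φ : n → ℂ, star φ ⬝ᵥ φ = 1 ∧ star ψ ⬝ᵥ φ = 0 ∧
    x = (star φ ⬝ᵥ (Ω *ᵥ φ)).re}

/-- The state `ψ_θ = sin θ·|00⟩ + cos θ·|11⟩` in `ℂ²⊗ℂ²`. -/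
noncomputable def psiTheta (θ : ℝ) : Fin 2 × Fin 2 → ℂ :=
  fun p => if p = (0, 0) then (Real.sin θ : ℂ)
    else if p = (1, 1) then (Real.cos θ : ℂ) else 0

/-- Pauli Z. -/
def pauliZ : Matrix (Fin 2) (Fin 2) ℂ := !![1, 0; 0, -1]

/-- The matrix `N` with diagonal `(1, t, t, t²)`, entries `−t` in the `(|00⟩,|11⟩)` corners,
and zeros elsewhere. -/
noncomputable def Nmat (t : ℝ) : Matrix (Fin 2 × Fin 2) (Fin 2 × Fin 2) ℂ :=
  Matrix.of fun p q =>
    if p = (0, 0) ∧ q = (0, 0) then 1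
    else if p = (0, 1) ∧ q = (0, 1) then (t : ℂ)
    else if p = (1, 0) ∧ q = (1, 0) then (t : ℂ)
    else if p = (1, 1) ∧ q = (1, 1) then ((t ^ 2 : ℝ) : ℂ)
    else if (p = (0, 0) ∧ q = (1, 1)) ∨ (p = (1, 1) ∧ q = (0, 0)) then ((-t : ℝ) : ℂ)
    else 0

/-- The optimal two-qubit verification strategy
`Ω_opt = α(θ)·P⁺_{ZZ} + (1−α(θ))·(I − N/(1+t)²)` with `α(θ) = (2−sin 2θ)/(4+sin 2θ)`. -/
noncomputable def Ωopt (θ : ℝ) : Matrix (Fin 2 × Fin 2) (Fin 2 × Fin 2) ℂ :=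
  (((2 - Real.sin (2 * θ)) / (4 + Real.sin (2 * θ)) : ℝ) : ℂ) •
      ((1/2 : ℂ) • ((1 : Matrix (Fin 2 × Fin 2) (Fin 2 × Fin 2) ℂ) + pauliZ ⊗ₖ pauliZ))
    + ((1 - (2 - Real.sin (2 * θ)) / (4 + Real.sin (2 * θ)) : ℝ) : ℂ) •
      ((1 : Matrix (Fin 2 × Fin 2) (Fin 2 × Fin 2) ℂ)
        - ((1 / (1 + Real.tan θ) ^ 2 : ℝ) : ℂ) • Nmat (Real.tan θ))

set_option maxHeartbeats 2000000 in
lemma key (θ : ℝ) (hθ : θ ∈ Set.Ioo 0 (Real.pi / 2)) :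
    Ωopt θ = (((2 + Real.sin (2*θ)) / (4 + Real.sin (2*θ)) : ℝ) : ℂ) • 1
      + ((2 / (4 + Real.sin (2*θ)) : ℝ) : ℂ) •
          vecMulVec (psiTheta θ) (star (psiTheta θ)) := by
  have hs : 0 < Real.sin θ := Real.sin_pos_of_pos_of_lt_pi hθ.1 (by linarith [Real.pi_pos, hθ.2])
  have hc : 0 < Real.cos θ := Real.cos_pos_of_mem_Ioo ⟨by linarith [hθ.1, Real.pi_pos], hθ.2⟩
  have hpyth : Real.sin θ ^ 2 + Real.cos θ ^ 2 = 1 := Real.sin_sq_add_cos_sq θ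
  have hs2 : Real.sin (2*θ) = 2 * Real.sin θ * Real.cos θ := Real.sin_two_mul θ
  have htan : Real.tan θ = Real.sin θ / Real.cos θ := Real.tan_eq_sin_div_cos θ
  have hden : (4 : ℝ) + Real.sin (2*θ) ≠ 0 := by nlinarith
  have hden2 : (1 : ℝ) + Real.tan θ ≠ 0 := by rw [htan]; positivity
  have hE : ((1 : ℝ) + Real.sin θ / Real.cos θ)^2 = (1 + 2*Real.sin θ*Real.cos θ)/(Real.cos θ)^2 := by
    field_simp
    linear_combination hpyth
  have h12u : (1:ℝ) + 2*Real.sin θ*Real.cos θ ≠ 0 := by nlinarith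
  have hden' : (4:ℝ) + 2*Real.sin θ*Real.cos θ ≠ 0 := by nlinarith
  have hpythC : Complex.sin θ ^ 2 + Complex.cos θ ^ 2 = 1 := Complex.sin_sq_add_cos_sq θ
  have hcC : Complex.cos θ ≠ 0 := by
    rw [← Complex.ofReal_cos]; exact_mod_cast hc.ne'
  have hsC : Complex.sin θ ≠ 0 := by
    rw [← Complex.ofReal_sin]; exact_mod_cast hs.ne'
  have h12uC : (1:ℂ) + 2 * Complex.sin θ * Complex.cos θ ≠ 0 := by
    rw [← Complex.ofReal_cos, ← Complex.ofReal_sin]; exact_mod_cast h12u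
  have hdenC : (4:ℂ) + 2 * Complex.sin θ * Complex.cos θ ≠ 0 := by
    rw [← Complex.ofReal_cos, ← Complex.ofReal_sin]; exact_mod_cast hden'
  have hEC : ((1:ℂ) + Complex.sin θ / Complex.cos θ)^2
      = (1 + 2 * Complex.sin θ * Complex.cos θ) / Complex.cos θ ^ 2 := by
    field_simp
    linear_combination hpythC
  ext ⟨i, j⟩ ⟨k, l⟩
  fin_cases i <;> fin_cases j <;> fin_cases k <;> fin_cases l <;>
    simp [Ωopt, psiTheta, Nmat, pauliZ, Matrix.one_apply, vecMulVec_apply,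
      Matrix.kroneckerMap_apply, hs2, htan, Prod.ext_iff,
      -Complex.ofReal_sin, -Complex.ofReal_cos] <;>
    push_cast <;> rw [hEC] <;> field_simp <;>
    first
      | ring1
      | linear_combination (-32*Complex.sin (θ:ℂ)^3*Complex.cos (θ:ℂ)^5
          - 144*Complex.sin (θ:ℂ)^2*Complex.cos (θ:ℂ)^4
          - 192*Complex.sin (θ:ℂ)*Complex.cos (θ:ℂ)^3
          - 64*Complex.cos (θ:ℂ)^2) * hpythC
      | linear_combination (-32*Complex.sin (θ:ℂ)^3*Complex.cos (θ:ℂ)^3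
          - 144*Complex.sin (θ:ℂ)^2*Complex.cos (θ:ℂ)^2
          - 192*Complex.sin (θ:ℂ)*Complex.cos (θ:ℂ)
          - 64) * hpythC
      | linear_combination (-4*Complex.sin (θ:ℂ)*Complex.cos (θ:ℂ) - 2) * hpythC

lemma vmv_mulVec {n : Type*} [Fintype n] (v x : n → ℂ) :
    Matrix.vecMulVec v (star v) *ᵥ x = (star v ⬝ᵥ x) • v := by
  ext i
  simp only [Matrix.mulVec, Matrix.vecMulVec_apply, dotProduct, Pi.star_apply,
    Pi.smul_apply, smul_eq_mul, Finset.sum_mul]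
  exact Finset.sum_congr rfl fun j _ => by ring

lemma vmv_herm {n : Type*} [Fintype n] (v : n → ℂ) :
    (Matrix.vecMulVec v (star v))ᴴ = Matrix.vecMulVec v (star v) := by
  ext i j
  simp [Matrix.conjTranspose_apply, Matrix.vecMulVec_apply, mul_comm]

lemma vmv_mul_self {n : Type*} [Fintype n] [DecidableEq n] (v : n → ℂ) (hv : star v ⬝ᵥ v = 1) :
    Matrix.vecMulVec v (star v) * Matrix.vecMulVec v (star v) = Matrix.vecMulVec v (star v) := by
  ext i j
  simp only [Matrix.mul_apply, Matrix.vecMulVec_apply, Pi.star_apply]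
  have : ∑ k, v i * star (v k) * (v k * star (v j))
      = (∑ k, star (v k) * v k) * (v i * star (v j)) := by
    rw [Finset.sum_mul]; exact Finset.sum_congr rfl fun k _ => by ring
  rw [this]
  have hv' : (∑ k, star (v k) * v k) = 1 := hv
  rw [hv', one_mul]
set_option maxHeartbeats 1000000 in
theorem stmt_15 (θ : ℝ) (hθ : θ ∈ Set.Ioo 0 (Real.pi / 2)) (hθ4 : θ ≠ Real.pi / 4) :
    (Ωopt θ).IsHermitian ∧
    (Ωopt θ).PosSemidef ∧
    ((1 : Matrix (Fin 2 × Fin 2) (Fin 2 × Fin 2) ℂ) - Ωopt θ).PosSemidef ∧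
    Ωopt θ *ᵥ psiTheta θ = psiTheta θ ∧
    qparam (Ωopt θ) (psiTheta θ) = (2 + Real.sin (2 * θ)) / (4 + Real.sin (2 * θ)) := by
  have hs : 0 < Real.sin θ :=
    Real.sin_pos_of_pos_of_lt_pi hθ.1 (by linarith [Real.pi_pos, hθ.2])
  have hc : 0 < Real.cos θ :=
    Real.cos_pos_of_mem_Ioo ⟨by linarith [hθ.1, Real.pi_pos], hθ.2⟩
  have hpyth : Real.sin θ ^ 2 + Real.cos θ ^ 2 = 1 := Real.sin_sq_add_cos_sq θ
  have hs2pos : 0 < Real.sin (2 * θ) := by rw [Real.sin_two_mul]; positivity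
  have hden : (0:ℝ) < 4 + Real.sin (2 * θ) := by linarith
  set lr : ℝ := (2 + Real.sin (2 * θ)) / (4 + Real.sin (2 * θ)) with hlr
  set mr : ℝ := 2 / (4 + Real.sin (2 * θ)) with hmr
  have hl0 : 0 ≤ lr := by rw [hlr]; positivity
  have hm0 : 0 ≤ mr := by rw [hmr]; positivity
  have hlm : lr + mr = 1 := by rw [hlr, hmr]; field_simp; ring
  have hlmC : (lr : ℂ) + (mr : ℂ) = 1 := by exact_mod_cast hlm
  set ψ := psiTheta θ with hψ
  have hψψ : star ψ ⬝ᵥ ψ = 1 := by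
    have h1 : Real.sin θ * Real.sin θ + Real.cos θ * Real.cos θ = 1 := by nlinarith
    simp [hψ, psiTheta, dotProduct, Fintype.sum_prod_type, Fin.sum_univ_two,
      Prod.ext_iff]
    rw [← Complex.ofReal_sin, ← Complex.ofReal_cos, Complex.conj_ofReal, Complex.conj_ofReal]
    exact_mod_cast h1
  set M := Matrix.vecMulVec ψ (star ψ) with hM
  have hkey : Ωopt θ = (lr:ℂ) • 1 + (mr:ℂ) • M := key θ hθ
  have hMH : Mᴴ = M := vmv_herm ψ
  have hH : (Ωopt θ).IsHermitian := by
    show (Ωopt θ)ᴴ = Ωopt θ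
    rw [hkey, Matrix.conjTranspose_add, Matrix.conjTranspose_smul, Matrix.conjTranspose_smul,
      Matrix.conjTranspose_one, hMH]
    simp [Complex.star_def, Complex.conj_ofReal]
  have hquad : ∀ x : Fin 2 × Fin 2 → ℂ, star x ⬝ᵥ (Ωopt θ *ᵥ x)
      = (lr:ℂ) * (star x ⬝ᵥ x) + (mr:ℂ) * ((star ψ ⬝ᵥ x) * star (star ψ ⬝ᵥ x)) := by
    intro x
    rw [hkey, Matrix.add_mulVec, Matrix.smul_mulVec, Matrix.smul_mulVec,
      Matrix.one_mulVec, hM, vmv_mulVec]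
    rw [dotProduct_add]
    rw [dotProduct_smul, dotProduct_smul, dotProduct_smul]
    rw [Matrix.star_dotProduct (v := x) (w := ψ)]
    simp only [smul_eq_mul]
    try ring
  have hl0C : (0:ℂ) ≤ (lr:ℂ) := by exact_mod_cast hl0
  have hm0C : (0:ℂ) ≤ (mr:ℂ) := by exact_mod_cast hm0
  have hpos : (Ωopt θ).PosSemidef := by
    refine Matrix.PosSemidef.of_dotProduct_mulVec_nonneg hH fun x => ?_
    rw [hquad x]
    exact add_nonneg (mul_nonneg hl0C (dotProduct_star_self_nonneg x))
      (mul_nonneg hm0C (mul_star_self_nonneg _))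
  have hsub : (1 : Matrix (Fin 2 × Fin 2) (Fin 2 × Fin 2) ℂ) - Ωopt θ = (mr:ℂ) • (1 - M) := by
    rw [hkey, show (lr:ℂ) = 1 - (mr:ℂ) from by linear_combination hlmC]
    rw [smul_sub, sub_smul, one_smul]
    abel
  have hPH : ((1 : Matrix (Fin 2 × Fin 2) (Fin 2 × Fin 2) ℂ) - M)ᴴ = 1 - M := by
    rw [Matrix.conjTranspose_sub, Matrix.conjTranspose_one, hMH]
  have hPP : ((1 : Matrix (Fin 2 × Fin 2) (Fin 2 × Fin 2) ℂ) - M) * (1 - M) = 1 - M := by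
    simp only [sub_mul, mul_sub, one_mul, mul_one, hM, vmv_mul_self ψ hψψ]
    abel
  have hPpos : ∀ x : Fin 2 × Fin 2 → ℂ, 0 ≤ star x ⬝ᵥ ((1 - M) *ᵥ x) := by
    intro x
    have e : star x ⬝ᵥ ((1 - M) *ᵥ x)
        = star ((1 - M) *ᵥ x) ⬝ᵥ ((1 - M) *ᵥ x) := by
      conv_lhs => rw [← hPP, ← Matrix.mulVec_mulVec, Matrix.dotProduct_mulVec]
      rw [Matrix.star_mulVec, hPH]
    rw [e]
    exact dotProduct_star_self_nonneg _
  have hsubpos : ((1 : Matrix (Fin 2 × Fin 2) (Fin 2 × Fin 2) ℂ) - Ωopt θ).PosSemidef := by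
    refine Matrix.PosSemidef.of_dotProduct_mulVec_nonneg ?_ fun x => ?_
    · show _ᴴ = _
      rw [Matrix.conjTranspose_sub, Matrix.conjTranspose_one, hH]
    · rw [hsub, Matrix.smul_mulVec, dotProduct_smul, smul_eq_mul]
      exact mul_nonneg hm0C (hPpos x)
  have hfix : Ωopt θ *ᵥ ψ = ψ := by
    rw [hkey, Matrix.add_mulVec, Matrix.smul_mulVec, Matrix.smul_mulVec,
      Matrix.one_mulVec, hM, vmv_mulVec, hψψ, one_smul, ← add_smul, hlmC, one_smul]
  have hset : {x : ℝ | ∃ φ : Fin 2 × Fin 2 → ℂ, star φ ⬝ᵥ φ = 1 ∧ star ψ ⬝ᵥ φ = 0 ∧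
      x = (star φ ⬝ᵥ (Ωopt θ *ᵥ φ)).re} = {lr} := by
    ext x
    simp only [Set.mem_setOf_eq, Set.mem_singleton_iff]
    constructor
    · rintro ⟨φ, h1, h2, rfl⟩
      rw [hquad φ, h1, h2]
      simp
    · rintro rfl
      refine ⟨fun p => if p = ((0:Fin 2), (1:Fin 2)) then 1 else 0, ?_, ?_, ?_⟩
      · simp [dotProduct, Fintype.sum_prod_type, Fin.sum_univ_two, Prod.ext_iff]
      · simp [dotProduct, Fintype.sum_prod_type, Fin.sum_univ_two, hψ, psiTheta,
          Prod.ext_iff]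
      · rw [hquad]
        have h2 : star ψ ⬝ᵥ (fun p => if p = ((0:Fin 2), (1:Fin 2)) then (1:ℂ) else 0) = 0 := by
          simp [dotProduct, Fintype.sum_prod_type, Fin.sum_univ_two, hψ, psiTheta,
            Prod.ext_iff]
        have h1 : star (fun p => if p = ((0:Fin 2), (1:Fin 2)) then (1:ℂ) else 0)
            ⬝ᵥ (fun p => if p = ((0:Fin 2), (1:Fin 2)) then (1:ℂ) else 0) = 1 := by
          simp [dotProduct, Fintype.sum_prod_type, Fin.sum_univ_two, Prod.ext_iff]
        rw [h1, h2]
        simp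
  have hq : qparam (Ωopt θ) ψ = lr := by
    rw [qparam, hset, csSup_singleton]
  exact ⟨hH, hpos, hsubpos, hfix, hq⟩
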